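/- Let 0 ≤ α < 1 and let u, v₁, …, v_m be unit vectors in ℝ^d with ⟨u,vᵢ⟩ < 0 for all i and ⟨vᵢ,vⱼ⟩ ≤ α for i ≠ j. Setting cᵢ = −⟨u,vᵢ⟩ > 0, we have Σᵢ cᵢ² ≤ 1 + α(Σᵢ cᵢ)². -/

import Mathlib

theorem neg_neighborhood_restated {d m : ℕ} (α : ℝ) (hα0 : 0 ≤ α) (hα1 : α < 1)
    (u : EuclideanSpace ℝ (Fin d)) (v : Fin m → EuclideanSpace ℝ (Fin d))
    (hu : ‖u‖ = 1) (hv : ∀ i, ‖v i‖ = 1)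
    (hneg : ∀ i, (inner ℝ u (v i) : ℝ) < 0)
    (hpair : ∀ i j, i ≠ j → (inner ℝ (v i) (v j) : ℝ) ≤ α) :
    ∑ i, (-(inner ℝ u (v i) : ℝ)) ^ 2 ≤ 1 + α * (∑ i, -(inner ℝ u (v i) : ℝ)) ^ 2 := by
  set c : Fin m → ℝ := fun i => -(inner ℝ u (v i) : ℝ) with hc
  have hcpos : ∀ i, 0 < c i := fun i => by simp [hc]; exact hneg i
  set s : EuclideanSpace ℝ (Fin d) := ∑ i, c i • v i with hs
  have key : (0:ℝ) ≤ ‖u + s‖ ^ 2 := sq_nonneg _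
  rw [norm_add_sq_real, hu] at key
  have h1 : (inner ℝ u s : ℝ) = -∑ i, c i ^ 2 := by
    rw [hs, inner_sum]
    rw [← Finset.sum_neg_distrib]
    refine Finset.sum_congr rfl fun i _ => ?_
    rw [real_inner_smul_right]
    have : (inner ℝ u (v i) : ℝ) = -c i := by simp [hc]
    rw [this]; ring
  have h2 : (‖s‖:ℝ) ^ 2 = ∑ i, ∑ j, c i * c j * (inner ℝ (v i) (v j) : ℝ) := by
    rw [← real_inner_self_eq_norm_sq, hs, sum_inner]
    refine Finset.sum_congr rfl fun i _ => ?_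
    rw [inner_sum]
    refine Finset.sum_congr rfl fun j _ => ?_
    rw [real_inner_smul_left, real_inner_smul_right]; ring
  have h3 : ∑ i, ∑ j, c i * c j * (inner ℝ (v i) (v j) : ℝ)
      ≤ ∑ i, ∑ j, (if i = j then c i ^ 2 else α * (c i * c j)) := by
    refine Finset.sum_le_sum fun i _ => Finset.sum_le_sum fun j _ => ?_
    by_cases hij : i = j
    · subst hij
      have hvi : (inner ℝ (v i) (v i) : ℝ) = 1 := by
        rw [real_inner_self_eq_norm_sq, hv i]; norm_num
      simp [hvi, hv i, sq]
    · simp only [hij, if_false]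
      have := hpair i j hij
      nlinarith [hcpos i, hcpos j, mul_pos (hcpos i) (hcpos j)]
  have h4 : ∑ i, ∑ j, (if i = j then c i ^ 2 else α * (c i * c j))
      = ∑ i, c i ^ 2 + α * ((∑ i, c i) ^ 2 - ∑ i, c i ^ 2) := by
    have : ∀ i j : Fin m, (if i = j then c i ^ 2 else α * (c i * c j))
        = α * (c i * c j) + (if i = j then c i ^ 2 - α * (c i * c j) else 0) := by
      intro i j; by_cases hij : i = j <;> simp [hij] <;> ring
    simp only [this, Finset.sum_add_distrib, Finset.sum_ite_eq, Finset.mem_univ, if_true]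
    have hαsum : ∑ i : Fin m, ∑ j : Fin m, α * (c i * c j) = α * (∑ i, c i) ^ 2 := by
      rw [sq, Finset.sum_mul_sum, Finset.mul_sum]
      exact Finset.sum_congr rfl fun i _ => by rw [Finset.mul_sum]
    rw [hαsum, Finset.sum_sub_distrib]
    have h5 : ∑ x : Fin m, α * (c x * c x) = α * ∑ x, c x ^ 2 := by
      rw [Finset.mul_sum]
      exact Finset.sum_congr rfl fun i _ => by ring
    rw [h5]; ring
  have hsum := h1 ▸ key
  have h2' := h2
  have hineq : (0:ℝ) ≤ 1 + 2 * (-∑ i, c i ^ 2) + (∑ i, c i ^ 2 + α * ((∑ i, c i) ^ 2 - ∑ i, c i ^ 2)) := by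
    calc (0:ℝ) ≤ 1 ^ 2 + 2 * (inner ℝ u s : ℝ) + ‖s‖ ^ 2 := key
    _ = 1 + 2 * (-∑ i, c i ^ 2) + ∑ i, ∑ j, c i * c j * (inner ℝ (v i) (v j) : ℝ) := by
        rw [h1, h2]; ring
    _ ≤ 1 + 2 * (-∑ i, c i ^ 2) + (∑ i, c i ^ 2 + α * ((∑ i, c i) ^ 2 - ∑ i, c i ^ 2)) := by
        rw [← h4]; linarith [h3]
  have hcsq : 0 ≤ ∑ i, c i ^ 2 := Finset.sum_nonneg fun i _ => sq_nonneg _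
  nlinarith [hcsq]
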